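/- Let 1 < p < q be integers, and let μ be the Borel measure on [1/q, 1] with density dμ(x) = dx/(x·log q) with respect to Lebesgue measure. Then μ is a probability measure invariant under T_{p,q}: for every Borel set E ⊆ [1/q, 1], μ(T_{p,q}^{−1}(E)) = μ(E). -/

import Mathlib

open MeasureTheory ENNReal

/-- The piecewise affine circle map `T_{p,q} : [1/q, 1] → [1/q, 1]`, given by
`x ↦ p·x` on `[1/q, 1/p)` and `x ↦ (p/q)·x` on `[1/p, 1]`. -/
noncomputable def Tmap (p q : ℕ) (x : ℝ) : ℝ :=
  if x < 1 / (p : ℝ) then (p : ℝ) * x else (p : ℝ) / (q : ℝ) * x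

private lemma scale_lintegral (L c : ℝ) (hc : 0 < c) {A : Set ℝ} (hA : MeasurableSet A) :
    ∫⁻ x in (fun x => c * x) ⁻¹' A, ENNReal.ofReal (1 / (x * L)) ∂volume
      = ∫⁻ x in A, ENNReal.ofReal (1 / (x * L)) ∂volume := by
  set g : ℝ → ℝ≥0∞ := fun x => ENNReal.ofReal (1 / (x * L)) with hg
  have hgm : Measurable g := by measurability
  have hmul : Measurable fun x : ℝ => c * x := measurable_const_mul c
  have hkey : ∀ x : ℝ, ((fun x => c * x) ⁻¹' A).indicator g x
      = (A.indicator fun y => g (c⁻¹ * y)) (c * x) := by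
    intro x
    by_cases hx : c * x ∈ A
    · simp [Set.indicator_of_mem, hx, Set.mem_preimage.mpr hx, inv_mul_cancel_left₀ hc.ne']
    · simp [Set.indicator_of_notMem, hx, Set.mem_preimage, hx]
  calc ∫⁻ x in (fun x => c * x) ⁻¹' A, g x ∂volume
      = ∫⁻ x, ((fun x => c * x) ⁻¹' A).indicator g x ∂volume := by
        rw [lintegral_indicator (hmul hA)]
    _ = ∫⁻ x, (A.indicator fun y => g (c⁻¹ * y)) (c * x) ∂volume := by
        simp only [hkey]
    _ = ∫⁻ y, (A.indicator fun y => g (c⁻¹ * y)) y ∂(Measure.map (fun x => c * x) volume) := by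
        exact (lintegral_map ((hgm.comp (measurable_const_mul c⁻¹)).indicator hA) hmul).symm
    _ = ENNReal.ofReal |c⁻¹| * ∫⁻ y, (A.indicator fun y => g (c⁻¹ * y)) y ∂volume := by
        rw [Real.map_volume_mul_left hc.ne', lintegral_smul_measure, smul_eq_mul]
    _ = ENNReal.ofReal c⁻¹ * ∫⁻ y in A, g (c⁻¹ * y) ∂volume := by
        rw [abs_of_pos (inv_pos.mpr hc), lintegral_indicator hA]
    _ = ENNReal.ofReal c⁻¹ * ∫⁻ y in A, ENNReal.ofReal c * g y ∂volume := by
        congr 1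
        apply lintegral_congr
        intro y
        rw [hg, ← ENNReal.ofReal_mul hc.le]
        rcases eq_or_ne y 0 with rfl | hy
        · simp
        · field_simp
    _ = ∫⁻ y in A, g y ∂volume := by
        rw [lintegral_const_mul _ hgm, ← mul_assoc, ← ENNReal.ofReal_mul (by positivity),
          inv_mul_cancel₀ hc.ne', ENNReal.ofReal_one, one_mul]

/-- The measure `dμ(x) = dx/(x·log q)` on `[1/q, 1]` is a probability measure
invariant under `T_{p,q}`: `μ(T_{p,q}⁻¹(E)) = μ(E)` for every Borel
`E ⊆ [1/q, 1]`. -/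
theorem Tmap_invariant_measure (p q : ℕ) (hp : 1 < p) (hpq : p < q) :
    letI μ : Measure ℝ :=
      (volume.withDensity fun x => ENNReal.ofReal (1 / (x * Real.log q))).restrict
        (Set.Icc (1 / (q : ℝ)) 1)
    IsProbabilityMeasure μ ∧
      ∀ E : Set ℝ, MeasurableSet E → E ⊆ Set.Icc (1 / (q : ℝ)) 1 →
        μ (Tmap p q ⁻¹' E) = μ E := by
  set L : ℝ := Real.log q with hLdef
  set g : ℝ → ℝ≥0∞ := fun x => ENNReal.ofReal (1 / (x * L)) with hg
  set ν : Measure ℝ := volume.withDensity g with hν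
  have hgm : Measurable g := by measurability
  -- basic numeric facts
  have hp1 : (1 : ℝ) < p := by exact_mod_cast hp
  have hq1 : (1 : ℝ) < q := by exact_mod_cast hp.trans hpq
  have hpq' : (p : ℝ) < q := by exact_mod_cast hpq
  have hp0 : (0 : ℝ) < p := by linarith
  have hq0 : (0 : ℝ) < q := by linarith
  have hL : 0 < L := Real.log_pos hq1
  set a : ℝ := 1 / (q : ℝ) with ha'
  set μ' : Measure ℝ := ν.restrict (Set.Icc a 1) with hμ'
  set b : ℝ := 1 / (p : ℝ) with hb'
  set r : ℝ := (p : ℝ) / q with hr'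
  have ha0 : 0 < a := by positivity
  have hb0 : 0 < b := by positivity
  have hr0 : 0 < r := by positivity
  have hab : a < b := by
    rw [ha', hb']
    exact one_div_lt_one_div_of_lt hp0 hpq'
  have hb1 : b ≤ 1 := by
    rw [hb']
    rw [div_le_one hp0]; linarith
  have hr1 : r < 1 := by
    rw [hr', div_lt_one hq0]; exact hpq'
  have har : a ≤ r := by
    rw [ha', hr', div_le_div_iff_of_pos_right hq0]; linarith
  have hpa : (p : ℝ) * a = r := by rw [ha', hr']; field_simp
  have hpb : (p : ℝ) * b = 1 := by rw [hb']; field_simp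
  have hrb : r * b = a := by rw [ha', hb', hr']; field_simp
  -- singletons are null
  have hsing : ∀ x : ℝ, ν {x} = 0 := by
    intro x
    rw [hν, withDensity_apply _ (measurableSet_singleton x),
      Measure.restrict_eq_zero.mpr Real.volume_singleton, lintegral_zero_measure]
  -- measurability of the map
  have hT : Measurable (Tmap p q) := by
    unfold Tmap
    exact Measurable.ite (measurableSet_lt measurable_id measurable_const)
      (measurable_const_mul _) (measurable_const_mul _)
  constructor
  · -- probability measure
    constructor
    rw [hμ', Measure.restrict_apply_univ, hν, withDensity_apply _ measurableSet_Icc]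
    have hint : IntegrableOn (fun x : ℝ => 1 / (x * L)) (Set.Icc a 1) volume := by
      apply ContinuousOn.integrableOn_compact isCompact_Icc
      apply ContinuousOn.div continuousOn_const
        ((continuousOn_id.mul continuousOn_const))
      intro x hx
      have : 0 < x := lt_of_lt_of_le ha0 hx.1
      exact mul_ne_zero this.ne' hL.ne'
    have hpos : 0 ≤ᵐ[volume.restrict (Set.Icc a 1)] fun x : ℝ => 1 / (x * L) := by
      filter_upwards [ae_restrict_mem measurableSet_Icc] with x hx
      have : 0 < x := lt_of_lt_of_le ha0 hx.1
      positivity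
    rw [hg, ← ofReal_integral_eq_lintegral_ofReal hint hpos]
    have hval : ∫ x in Set.Icc a 1, 1 / (x * L) ∂volume = 1 := by
      have h1 : ∀ x : ℝ, 1 / (x * L) = L⁻¹ * x⁻¹ := by
        intro x; rw [one_div, mul_inv]; ring
      simp_rw [h1]
      have hle : a ≤ 1 := le_trans hab.le hb1
      rw [MeasureTheory.integral_Icc_eq_integral_Ioc, ← intervalIntegral.integral_of_le hle,
        intervalIntegral.integral_const_mul, integral_inv_of_pos ha0 one_pos, ha',
        one_div_one_div, ← hLdef]
      exact inv_mul_cancel₀ hL.ne'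
    rw [hval, ENNReal.ofReal_one]
  · -- invariance
    intro E hEmeas hE
    have hTE : MeasurableSet (Tmap p q ⁻¹' E) := hT hEmeas
    -- the two pieces of the preimage
    set S1 : Set ℝ := (fun x => (p : ℝ) * x) ⁻¹' (E ∩ Set.Ico r 1) with hS1
    set S2 : Set ℝ := (fun x => r * x) ⁻¹' (E ∩ Set.Icc a r) with hS2
    have hS1m : MeasurableSet S1 :=
      (measurable_const_mul _) (hEmeas.inter measurableSet_Ico)
    have hS2m : MeasurableSet S2 :=
      (measurable_const_mul _) (hEmeas.inter measurableSet_Icc)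
    have hS1sub : S1 ⊆ Set.Ico a b := by
      rintro x ⟨-, hx1, hx2⟩
      constructor
      · have : (p : ℝ) * a ≤ (p : ℝ) * x := by rwa [hpa]
        exact le_of_mul_le_mul_left this hp0
      · have : (p : ℝ) * x < (p : ℝ) * b := by rwa [hpb]
        exact lt_of_mul_lt_mul_left this hp0.le
    have hS2sub : S2 ⊆ Set.Icc b 1 := by
      rintro x ⟨-, hx1, hx2⟩
      constructor
      · have : r * b ≤ r * x := by rwa [hrb]
        exact le_of_mul_le_mul_left this hr0
      · have : r * x ≤ r * 1 := by rwa [mul_one]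
        exact le_of_mul_le_mul_left this hr0
    have hsplit : Tmap p q ⁻¹' E ∩ Set.Icc a 1 = S1 ∪ S2 := by
      ext x
      constructor
      · rintro ⟨hxE, hxa, hx1⟩
        simp only [Set.mem_preimage, Tmap] at hxE
        by_cases hxb : x < 1 / (p : ℝ)
        · rw [if_pos hxb] at hxE
          left
          refine ⟨hxE, ?_, ?_⟩
          · rw [← hpa]; exact mul_le_mul_of_nonneg_left hxa hp0.le
          · rw [← hpb]; exact mul_lt_mul_of_pos_left (hb' ▸ hxb) hp0
        · rw [if_neg hxb] at hxE
          right
          refine ⟨(by rwa [← hr'] at hxE : r * x ∈ E), ?_, ?_⟩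
          · rw [← hrb]
            exact mul_le_mul_of_nonneg_left (hb' ▸ not_lt.mp hxb) hr0.le
          · calc r * x ≤ r * 1 := mul_le_mul_of_nonneg_left hx1 hr0.le
              _ = r := mul_one r
      · rintro (hx | hx)
        · have hxab := hS1sub hx
          refine ⟨?_, hxab.1, hxab.2.le.trans hb1⟩
          simp only [Set.mem_preimage, Tmap, if_pos (hb' ▸ hxab.2)]
          exact hx.1
        · have hxb1 := hS2sub hx
          refine ⟨?_, hab.le.trans hxb1.1, hxb1.2⟩
          simp only [Set.mem_preimage, Tmap, if_neg (not_lt.mpr (hb' ▸ hxb1.1)), ← hr']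
          exact hx.1
    have hdisj : Disjoint S1 S2 := by
      apply Set.disjoint_of_subset hS1sub hS2sub
      rw [Set.disjoint_iff]
      rintro x ⟨⟨-, h1⟩, h2, -⟩
      exact absurd h2 (not_le.mpr h1)
    -- compute each piece by the scaling lemma
    have hν1 : ν S1 = ν (E ∩ Set.Ico r 1) := by
      rw [hν, withDensity_apply _ hS1m,
        withDensity_apply _ (hEmeas.inter measurableSet_Ico), hg, hS1]
      exact scale_lintegral L p hp0 (hEmeas.inter measurableSet_Ico)
    have hν2 : ν S2 = ν (E ∩ Set.Icc a r) := by
      rw [hν, withDensity_apply _ hS2m,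
        withDensity_apply _ (hEmeas.inter measurableSet_Icc), hg, hS2]
      exact scale_lintegral L r hr0 (hEmeas.inter measurableSet_Icc)
    -- remove null boundary points
    have hIccIco : ν (E ∩ Set.Icc a r) = ν (E ∩ Set.Ico a r) := by
      apply le_antisymm
      · calc ν (E ∩ Set.Icc a r) ≤ ν ((E ∩ Set.Ico a r) ∪ {r}) := by
              apply measure_mono
              rintro x ⟨hxE, hx1, hx2⟩
              rcases lt_or_eq_of_le hx2 with h | h
              · exact Or.inl ⟨hxE, hx1, h⟩
              · exact Or.inr h
          _ ≤ ν (E ∩ Set.Ico a r) + ν {r} := measure_union_le _ _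
          _ = ν (E ∩ Set.Ico a r) := by rw [hsing, add_zero]
      · exact measure_mono (Set.inter_subset_inter_right _ Set.Ico_subset_Icc_self)
    have hE' : ν E = ν (E ∩ Set.Ico a 1) := by
      apply le_antisymm
      · calc ν E ≤ ν ((E ∩ Set.Ico a 1) ∪ {1}) := by
              apply measure_mono
              intro x hx
              rcases lt_or_eq_of_le (hE hx).2 with h | h
              · exact Or.inl ⟨hx, (hE hx).1, h⟩
              · exact Or.inr h
          _ ≤ ν (E ∩ Set.Ico a 1) + ν {1} := measure_union_le _ _
          _ = ν (E ∩ Set.Ico a 1) := by rw [hsing, add_zero]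
      · exact measure_mono Set.inter_subset_left
    have hEsplit : ν (E ∩ Set.Ico a 1) = ν (E ∩ Set.Ico a r) + ν (E ∩ Set.Ico r 1) := by
      rw [← Set.Ico_union_Ico_eq_Ico har hr1.le, Set.inter_union_distrib_left]
      apply measure_union
      · exact Set.disjoint_of_subset Set.inter_subset_right Set.inter_subset_right
          (Set.Ico_disjoint_Ico_same)
      · exact hEmeas.inter measurableSet_Ico
    -- put everything together
    have hres1 : μ' (Tmap p q ⁻¹' E) = ν (Tmap p q ⁻¹' E ∩ Set.Icc a 1) := by
      rw [hμ', Measure.restrict_apply hTE]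
    have hres2 : μ' E = ν E := by
      rw [hμ', Measure.restrict_apply hEmeas, Set.inter_eq_self_of_subset_left hE]
    rw [hres1, hres2, hsplit, measure_union hdisj hS2m, hν1, hν2, hIccIco, hE', hEsplit,
      add_comm]
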